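/- Let C be a compact convex body in the plane with boundary γ, and let C′ = C + v be a translate with boundary γ′. Then γ ∩ γ′ is the union of at most two segments (each possibly degenerate to a point or empty). In particular, if C is strictly convex, γ ∩ γ′ contains at most two points. -/

import Mathlib

/-- Horizontal convexity: if `p q ∈ D` at the same height, any point between them is in `D`. -/
lemma horiz_mem {D : Set (ℝ × ℝ)} (hconv : Convex ℝ D) {p q : ℝ × ℝ}
    (hp : p ∈ D) (hq : q ∈ D) (hpq : p.2 = q.2) {s : ℝ}
    (h1 : p.1 ≤ s) (h2 : s ≤ q.1) : (s, p.2) ∈ D := by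
  rcases eq_or_lt_of_le h1 with h | h
  · simpa [← h] using hp
  · have hq1 : p.1 < q.1 := lt_of_lt_of_le h h2
    set l : ℝ := (s - p.1) / (q.1 - p.1) with hl
    have hl0 : 0 ≤ l := div_nonneg (by linarith) (by linarith)
    have hl1 : l ≤ 1 := by
      rw [div_le_one (by linarith)]; linarith
    have key : l * (q.1 - p.1) = s - p.1 := div_mul_cancel₀ _ (by linarith)
    have := hconv hp hq (by linarith : (0:ℝ) ≤ 1 - l) hl0 (by ring)
    have hs : (1 - l) * p.1 + l * q.1 = s := by linear_combination key
    have h2' : (1 - l) * p.2 + l * q.2 = p.2 := by rw [← hpq]; ring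
    convert this using 1
    ext <;> simp [Prod.smul_def, hs, h2']

lemma slice_core {D : Set (ℝ × ℝ)} (hconv : Convex ℝ D) {A B R : ℝ × ℝ} {y μ s : ℝ}
    (hA : A ∈ D) (hB : B ∈ D) (hR : R ∈ D) (hA2 : A.2 = y) (hB2 : B.2 = y)
    (hμ0 : 0 ≤ μ) (hμ1 : μ ≤ 1)
    (hs1 : (1 - μ) * A.1 + μ * R.1 ≤ s) (hs2 : s ≤ (1 - μ) * B.1 + μ * R.1) :
    (s, (1 - μ) * y + μ * R.2) ∈ D := by
  have hE1 : (1 - μ) • A + μ • R ∈ D := hconv hA hR (by linarith) hμ0 (by ring)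
  have hE2 : (1 - μ) • B + μ • R ∈ D := hconv hB hR (by linarith) hμ0 (by ring)
  have h := horiz_mem hconv hE1 hE2 (by simp [Prod.smul_def, hA2, hB2])
    (s := s) (by simpa using hs1) (by simpa using hs2)
  simpa [Prod.smul_def, hA2] using h

lemma arith_aux {m N μ ε g d : ℝ} (hm : 0 < m) (hN0 : 0 ≤ N) (hμ0 : 0 ≤ μ)
    (hμm : μ * m < ε) (hεg : ε * (2*(m+N)) ≤ g * m) (hd : d ≤ N) : μ * d ≤ g - ε := by
  have hε0 : 0 < ε := lt_of_le_of_lt (mul_nonneg hμ0 hm.le) hμm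
  have h1 : μ * d ≤ μ * N := mul_le_mul_of_nonneg_left hd hμ0
  have h2 : (μ * m) * N ≤ ε * N := mul_le_mul_of_nonneg_right hμm.le hN0
  have hg0 : 0 < g * m := by nlinarith
  have hg : 0 < g := by nlinarith
  nlinarith

/-- key interior lemma -/
lemma mem_interior_of_between {D : Set (ℝ × ℝ)} (hconv : Convex ℝ D)
    {P Q A B : ℝ × ℝ} {t y : ℝ}
    (hP : P ∈ D) (hQ : Q ∈ D) (hA : A ∈ D) (hB : B ∈ D)
    (hPy : P.2 < y) (hQy : y < Q.2) (hA2 : A.2 = y) (hB2 : B.2 = y)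
    (hA1 : A.1 < t) (hB1 : t < B.1) : (t, y) ∈ interior D := by
  set m : ℝ := min (y - P.2) (Q.2 - y) with hm_def
  set N : ℝ := max (max |Q.1 - A.1| |Q.1 - B.1|) (max |P.1 - A.1| |P.1 - B.1|) with hN_def
  set g : ℝ := min (t - A.1) (B.1 - t) with hg_def
  have hm : 0 < m := lt_min (by linarith) (by linarith)
  have hg : 0 < g := lt_min (by linarith) (by linarith)
  have hN0 : 0 ≤ N := le_trans (abs_nonneg _) (le_trans (le_max_left _ _) (le_max_left _ _))
  set ε : ℝ := min (m/2) (g*m/(2*(m+N))) with hε_def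
  have hε : 0 < ε := lt_min (by positivity) (by positivity)
  have hεm : ε ≤ m/2 := min_le_left _ _
  have hεg : ε * (2*(m+N)) ≤ g*m := by
    have := min_le_right (m/2) (g*m/(2*(m+N)))
    rw [le_div_iff₀ (by positivity)] at this
    linarith
  rw [mem_interior_iff_mem_nhds, Metric.mem_nhds_iff]
  refine ⟨ε, hε, fun u hu => ?_⟩
  rw [Metric.mem_ball, Prod.dist_eq] at hu
  have hu1 : |u.1 - t| < ε := by
    rw [← Real.dist_eq]; exact lt_of_le_of_lt (le_max_left _ _) hu
  have hu2 : |u.2 - y| < ε := by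
    rw [← Real.dist_eq]; exact lt_of_le_of_lt (le_max_right _ _) hu
  obtain ⟨hu1a, hu1b⟩ := abs_lt.mp hu1
  obtain ⟨hu2a, hu2b⟩ := abs_lt.mp hu2
  have hgA : g ≤ t - A.1 := min_le_left _ _
  have hgB : g ≤ B.1 - t := min_le_right _ _
  rcases le_or_gt y u.2 with hk | hk
  · -- upper half : use Q
    have hQy' : (0:ℝ) < Q.2 - y := by linarith
    set μ : ℝ := (u.2 - y)/(Q.2 - y) with hμ_def
    have hμ0 : 0 ≤ μ := div_nonneg (by linarith) hQy'.le
    have hμQ : μ * (Q.2 - y) = u.2 - y := div_mul_cancel₀ _ hQy'.ne'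
    have hmQ : m ≤ Q.2 - y := min_le_right _ _
    have hμm : μ * m < ε := by
      have h1 : μ * m ≤ μ * (Q.2 - y) := mul_le_mul_of_nonneg_left hmQ hμ0
      rw [hμQ] at h1; linarith
    have hμ1 : μ ≤ 1 := by nlinarith
    have hNA1 : Q.1 - A.1 ≤ N :=
      le_trans (le_abs_self _) (le_trans (le_max_left _ _) (le_max_left _ _))
    have hNB1 : B.1 - Q.1 ≤ N := by
      rw [show B.1 - Q.1 = -(Q.1 - B.1) by ring]
      exact le_trans (neg_le_abs _) (le_trans (le_max_right _ _) (le_max_left _ _))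
    have ha := arith_aux hm hN0 hμ0 hμm hεg hNA1
    have hb := arith_aux hm hN0 hμ0 hμm hεg hNB1
    have hs1 : (1 - μ) * A.1 + μ * Q.1 ≤ u.1 := by
      have hr : (1 - μ) * A.1 + μ * Q.1 = A.1 + μ * (Q.1 - A.1) := by ring
      linarith
    have hs2 : u.1 ≤ (1 - μ) * B.1 + μ * Q.1 := by
      have hr : (1 - μ) * B.1 + μ * Q.1 = B.1 - μ * (B.1 - Q.1) := by ring
      linarith
    have := slice_core hconv hA hB hQ hA2 hB2 hμ0 hμ1 hs1 hs2
    have hcoord : ((u.1 : ℝ), (1 - μ) * y + μ * Q.2) = u := by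
      have h2 : (1 - μ) * y + μ * Q.2 = u.2 := by linear_combination hμQ
      rw [h2]
    rwa [hcoord] at this
  · -- lower half : use P
    have hPy' : (P.2 : ℝ) - y < 0 := by linarith
    set μ : ℝ := (u.2 - y)/(P.2 - y) with hμ_def
    have hμ0 : 0 ≤ μ := div_nonneg_iff.mpr (Or.inr ⟨by linarith, hPy'.le⟩)
    have hμP : μ * (P.2 - y) = u.2 - y := div_mul_cancel₀ _ hPy'.ne
    have hmP : m ≤ y - P.2 := min_le_left _ _
    have hμm : μ * m < ε := by
      have h1 : μ * m ≤ μ * (y - P.2) := mul_le_mul_of_nonneg_left hmP hμ0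
      have h2 : μ * (y - P.2) = y - u.2 := by linear_combination -hμP
      rw [h2] at h1; linarith
    have hμ1 : μ ≤ 1 := by nlinarith
    have hNA1 : P.1 - A.1 ≤ N :=
      le_trans (le_abs_self _) (le_trans (le_max_left _ _) (le_max_right _ _))
    have hNB1 : B.1 - P.1 ≤ N := by
      rw [show B.1 - P.1 = -(P.1 - B.1) by ring]
      exact le_trans (neg_le_abs _) (le_trans (le_max_right _ _) (le_max_right _ _))
    have ha := arith_aux hm hN0 hμ0 hμm hεg hNA1
    have hb := arith_aux hm hN0 hμ0 hμm hεg hNB1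
    have hs1 : (1 - μ) * A.1 + μ * P.1 ≤ u.1 := by
      have hr : (1 - μ) * A.1 + μ * P.1 = A.1 + μ * (P.1 - A.1) := by ring
      linarith
    have hs2 : u.1 ≤ (1 - μ) * B.1 + μ * P.1 := by
      have hr : (1 - μ) * B.1 + μ * P.1 = B.1 - μ * (B.1 - P.1) := by ring
      linarith
    have := slice_core hconv hA hB hP hA2 hB2 hμ0 hμ1 hs1 hs2
    have hcoord : ((u.1 : ℝ), (1 - μ) * y + μ * P.2) = u := by
      have h2 : (1 - μ) * y + μ * P.2 = u.2 := by linear_combination hμP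
      rw [h2]
    rwa [hcoord] at this

lemma wiggle {D : Set (ℝ × ℝ)} {z : ℝ × ℝ} (hz : z ∈ interior D) :
    ∃ r : ℝ, 0 < r ∧
      (z.1 + r, z.2) ∈ D ∧ (z.1 - r, z.2) ∈ D ∧ (z.1, z.2 + r) ∈ D ∧ (z.1, z.2 - r) ∈ D := by
  rw [mem_interior_iff_mem_nhds, Metric.mem_nhds_iff] at hz
  obtain ⟨r, hr, hball⟩ := hz
  have key : ∀ a b : ℝ, |a| < r → |b| < r → (z.1 + a, z.2 + b) ∈ D := by
    intro a b ha hb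
    apply hball
    rw [Metric.mem_ball, Prod.dist_eq]
    apply max_lt <;> rw [Real.dist_eq, add_sub_cancel_left] <;> assumption
  have habs : |r/2| < r := by rw [abs_of_pos (by linarith)]; linarith
  have habs' : |-(r/2)| < r := by rw [abs_neg]; exact habs
  have h0 : |(0:ℝ)| < r := by simpa using hr
  refine ⟨r/2, by linarith, ?_, ?_, ?_, ?_⟩
  · simpa using key (r/2) 0 habs h0
  · simpa [sub_eq_add_neg] using key (-(r/2)) 0 habs' h0
  · simpa using key 0 (r/2) h0 habs
  · simpa [sub_eq_add_neg] using key 0 (-(r/2)) h0 habs'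

lemma seg_horiz {al be cc : ℝ} (h : al ≤ be) :
    segment ℝ ((al, cc) : ℝ × ℝ) (be, cc) = {x : ℝ × ℝ | x.2 = cc ∧ x.1 ∈ Set.Icc al be} := by
  ext x
  constructor
  · rintro ⟨a, b, ha, hb, hab, rfl⟩
    refine ⟨?_, ?_, ?_⟩
    · show (a • ((al, cc) : ℝ × ℝ) + b • (be, cc)).2 = cc
      simp only [Prod.smul_mk, Prod.mk_add_mk, smul_eq_mul]
      linear_combination cc * hab
    · show al ≤ (a • ((al, cc) : ℝ × ℝ) + b • (be, cc)).1
      simp only [Prod.smul_mk, Prod.mk_add_mk, smul_eq_mul]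
      have e1 : a * al + b * al = al := by linear_combination al * hab
      linarith [mul_le_mul_of_nonneg_left h hb]
    · show (a • ((al, cc) : ℝ × ℝ) + b • (be, cc)).1 ≤ be
      simp only [Prod.smul_mk, Prod.mk_add_mk, smul_eq_mul]
      have e1 : a * be + b * be = be := by linear_combination be * hab
      linarith [mul_le_mul_of_nonneg_left h ha]
  · rintro ⟨h2, h1⟩
    have hseg : x.1 ∈ segment ℝ al be := by rwa [segment_eq_Icc h]
    obtain ⟨a, b, ha, hb, hab, hx⟩ := hseg
    refine ⟨a, b, ha, hb, hab, ?_⟩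
    ext
    · simpa [Prod.smul_mk, smul_eq_mul] using hx
    · simp only [Prod.smul_mk, Prod.mk_add_mk, smul_eq_mul, Prod.snd_add]
      rw [h2]
      linear_combination cc * hab

set_option maxHeartbeats 1000000 in
lemma translate_main {D : Set (ℝ × ℝ)} (hD : IsCompact D) (hconv : Convex ℝ D)
    (hint : (interior D).Nonempty) {e : ℝ} (he : 0 < e) :
    ∃ S₁ S₂ : Set (ℝ × ℝ),
      (S₁ = ∅ ∨ ∃ a b : ℝ × ℝ, S₁ = segment ℝ a b) ∧
      (S₂ = ∅ ∨ ∃ a b : ℝ × ℝ, S₂ = segment ℝ a b) ∧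
      {x : ℝ × ℝ | x ∈ frontier D ∧ x - (e, 0) ∈ frontier D} = S₁ ∪ S₂ := by
  set M : Set (ℝ × ℝ) := {x : ℝ × ℝ | x ∈ frontier D ∧ x - (e, 0) ∈ frontier D} with hM_def
  obtain ⟨z₀, hz₀⟩ := hint
  have hz₀D : z₀ ∈ D := interior_subset hz₀
  have hDne : D.Nonempty := ⟨z₀, hz₀D⟩
  have hclosed : IsClosed D := hD.isClosed
  have hfrsub : frontier D ⊆ D := hclosed.frontier_subset
  have hfr : ∀ z : ℝ × ℝ, z ∈ frontier D ↔ z ∈ D ∧ z ∉ interior D := by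
    intro z; rw [hclosed.frontier_eq]; exact Iff.rfl
  -- min and max of second coordinate
  obtain ⟨pc, hpcD, hpc⟩ := hD.exists_isMinOn hDne (continuous_snd.continuousOn)
  obtain ⟨pd, hpdD, hpd⟩ := hD.exists_isMaxOn hDne (continuous_snd.continuousOn)
  set c : ℝ := pc.2 with hc_def
  set d : ℝ := pd.2 with hd_def
  have hcle : ∀ x ∈ D, c ≤ x.2 := fun x hx => hpc hx
  have hdle : ∀ x ∈ D, x.2 ≤ d := fun x hx => hpd hx
  have hcd : c < d := by
    obtain ⟨r, hr, _, _, hu, hl⟩ := wiggle hz₀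
    have h1 := hcle _ hl
    have h2 := hdle _ hu
    simp only at h1 h2
    linarith
  -- extreme heights are on the frontier
  have hfrc : ∀ x ∈ D, x.2 = c → x ∈ frontier D := by
    intro x hx hxc
    rw [hfr]
    refine ⟨hx, fun hxint => ?_⟩
    obtain ⟨r, hr, _, _, _, hl⟩ := wiggle hxint
    have := hcle _ hl
    simp only at this
    linarith
  have hfrd : ∀ x ∈ D, x.2 = d → x ∈ frontier D := by
    intro x hx hxd
    rw [hfr]
    refine ⟨hx, fun hxint => ?_⟩
    obtain ⟨r, hr, _, _, hu, _⟩ := wiggle hxint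
    have := hdle _ hu
    simp only at this
    linarith
  have hsub : ∀ x : ℝ × ℝ, x - (e, 0) = (x.1 - e, x.2) := by
    intro x; ext <;> simp
  have hMD : ∀ x ∈ M, x ∈ D := fun x hx => hfrsub hx.1
  have hMD' : ∀ x ∈ M, ((x.1 - e, x.2) : ℝ × ℝ) ∈ D := by
    intro x hx
    have := hfrsub hx.2
    rwa [hsub x] at this
  -- the classification at interior heights
  have hclass : ∀ x ∈ M, c < x.2 → x.2 < d →
      (∀ s : ℝ, (s, x.2) ∈ D → s ≤ x.1) ∧ (∀ s : ℝ, (s, x.2) ∈ D → x.1 - e ≤ s) := by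
    intro x hx h1 h2
    have hxD : x ∈ D := hMD x hx
    have hxD' : ((x.1 - e, x.2) : ℝ × ℝ) ∈ D := hMD' x hx
    constructor
    · intro s hs
      by_contra hcon
      push_neg at hcon
      have := mem_interior_of_between hconv hpcD hpdD hxD' hs h1 h2 rfl rfl
        (by simpa using (by linarith : x.1 - e < x.1)) hcon
      have hxint : x ∈ interior D := by simpa using this
      exact ((hfr x).mp hx.1).2 hxint
    · intro s hs
      by_contra hcon
      push_neg at hcon
      have := mem_interior_of_between hconv hpcD hpdD hs hxD h1 h2 rfl rfl
        hcon (by simpa using (by linarith : x.1 - e < x.1))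
      have hxint : x - (e, 0) ∈ interior D := by rwa [hsub x]
      exact ((hfr _).mp hx.2).2 hxint

  -- squeeze lemma
  have hsqueeze : ∀ x ∈ M, c < x.2 → x.2 < d → ∀ P₁ Q₁ P₂ Q₂ : ℝ × ℝ,
      P₁ ∈ D → Q₁ ∈ D → P₂ ∈ D → Q₂ ∈ D → P₁.2 = Q₁.2 → P₂.2 = Q₂.2 →
      P₁.2 < x.2 → x.2 < P₂.2 → e ≤ Q₁.1 - P₁.1 → e ≤ Q₂.1 - P₂.1 →
      (e < Q₁.1 - P₁.1 ∨ e < Q₂.1 - P₂.1) → False := by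
    intro x hx hc1 hd1 P₁ Q₁ P₂ Q₂ hP₁ hQ₁ hP₂ hQ₂ h12 h34 hb1 hb2 hw1 hw2 hstrict
    obtain ⟨hmax, hmin⟩ := hclass x hx hc1 hd1
    set l : ℝ := (x.2 - P₁.2) / (P₂.2 - P₁.2) with hl_def
    have hden : 0 < P₂.2 - P₁.2 := by linarith
    have hl0 : 0 < l := div_pos (by linarith) hden
    have hl1 : l < 1 := by rw [div_lt_one hden]; linarith
    have hlc : l * (P₂.2 - P₁.2) = x.2 - P₁.2 := div_mul_cancel₀ _ hden.ne'
    have hW1 : (1 - l) • Q₁ + l • Q₂ ∈ D := hconv hQ₁ hQ₂ (by linarith) hl0.le (by ring)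
    have hW2 : (1 - l) • P₁ + l • P₂ ∈ D := hconv hP₁ hP₂ (by linarith) hl0.le (by ring)
    have hW1h : ((1 - l) • Q₁ + l • Q₂ : ℝ × ℝ).2 = x.2 := by
      simp only [Prod.snd_add, Prod.smul_snd, smul_eq_mul]
      linear_combination hlc - (1 - l) * h12 - l * h34
    have hW2h : ((1 - l) • P₁ + l • P₂ : ℝ × ℝ).2 = x.2 := by
      simp only [Prod.snd_add, Prod.smul_snd, smul_eq_mul]
      linear_combination hlc
    have hW1' : (((1 - l) • Q₁ + l • Q₂ : ℝ × ℝ).1, x.2) ∈ D := by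
      rw [← hW1h, Prod.mk.eta]; exact hW1
    have hW2' : (((1 - l) • P₁ + l • P₂ : ℝ × ℝ).1, x.2) ∈ D := by
      rw [← hW2h, Prod.mk.eta]; exact hW2
    have k1 := hmax _ hW1'
    have k2 := hmin _ hW2'
    have hW1f : ((1 - l) • Q₁ + l • Q₂ : ℝ × ℝ).1 = (1-l)*Q₁.1 + l*Q₂.1 := by
      simp only [Prod.fst_add, Prod.smul_fst, smul_eq_mul]
    have hW2f : ((1 - l) • P₁ + l • P₂ : ℝ × ℝ).1 = (1-l)*P₁.1 + l*P₂.1 := by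
      simp only [Prod.fst_add, Prod.smul_fst, smul_eq_mul]
    rw [hW1f] at k1; rw [hW2f] at k2
    rcases hstrict with hs | hs
    · nlinarith [mul_pos (by linarith : (0:ℝ) < 1 - l) (by linarith : (0:ℝ) < Q₁.1 - P₁.1 - e),
        mul_nonneg hl0.le (by linarith : (0:ℝ) ≤ Q₂.1 - P₂.1 - e)]
    · nlinarith [mul_nonneg (by linarith : (0:ℝ) ≤ 1 - l) (by linarith : (0:ℝ) ≤ Q₁.1 - P₁.1 - e),
        mul_pos hl0 (by linarith : (0:ℝ) < Q₂.1 - P₂.1 - e)]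
  by_cases hcaseA : ∃ y₀ : ℝ, c < y₀ ∧ y₀ < d ∧ ∃ p q : ℝ × ℝ,
      p ∈ D ∧ q ∈ D ∧ p.2 = y₀ ∧ q.2 = y₀ ∧ e < q.1 - p.1
  · obtain ⟨y₀, hy₀c, hy₀d, p, q, hpD, hqD, hp2, hq2, hpq⟩ := hcaseA
    have hy₀M : ∀ x ∈ M, x.2 ≠ y₀ := by
      intro x hx hxy
      obtain ⟨hmax, hmin⟩ := hclass x hx (by rw [hxy]; exact hy₀c) (by rw [hxy]; exact hy₀d)
      have hq' : ((q.1, x.2) : ℝ × ℝ) ∈ D := by rw [hxy, ← hq2, Prod.mk.eta]; exact hqD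
      have hp' : ((p.1, x.2) : ℝ × ℝ) ∈ D := by rw [hxy, ← hp2, Prod.mk.eta]; exact hpD
      have h1 := hmax q.1 hq'
      have h2 := hmin p.1 hp'
      linarith
    -- lower piece
    have hlower : ∃ S₁ : Set (ℝ × ℝ), (S₁ = ∅ ∨ ∃ a b : ℝ × ℝ, S₁ = segment ℝ a b) ∧
        {x ∈ M | x.2 < y₀} = S₁ := by
      by_cases hch : ∃ s : ℝ, ((s, c) : ℝ × ℝ) ∈ D ∧ ((s - e, c) : ℝ × ℝ) ∈ D
      · set T : Set ℝ := {s : ℝ | ((s, c) : ℝ × ℝ) ∈ D ∧ ((s - e, c) : ℝ × ℝ) ∈ D} with hT_def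
        obtain ⟨s₀, hs₀⟩ := hch
        have hTne : T.Nonempty := ⟨s₀, hs₀⟩
        have hTconv : Convex ℝ T := by
          intro s hs s' hs' a b ha hb hab
          have hcc : a * c + b * c = c := by linear_combination c * hab
          have h1 : ((a * s + b * s', c) : ℝ × ℝ) ∈ D := by
            have := hconv hs.1 hs'.1 ha hb hab
            simpa [Prod.smul_mk, Prod.mk_add_mk, smul_eq_mul, hcc] using this
          have h2 : ((a * s + b * s' - e, c) : ℝ × ℝ) ∈ D := by
            have := hconv hs.2 hs'.2 ha hb hab
            have he' : a * (s - e) + b * (s' - e) = a * s + b * s' - e := by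
              linear_combination (-e) * hab
            simpa [Prod.smul_mk, Prod.mk_add_mk, smul_eq_mul, hcc, he'] using this
          exact ⟨by simpa [smul_eq_mul] using h1, by simpa [smul_eq_mul] using h2⟩
        obtain ⟨R, hR⟩ := hD.isBounded.exists_norm_le
        have hTsub : T ⊆ Set.Icc (-R) R := by
          intro s hs
          have h1 := hR _ hs.1
          rw [Prod.norm_def] at h1
          have h2 : ‖s‖ ≤ R := le_trans (le_max_left _ _) h1
          rw [Real.norm_eq_abs] at h2
          exact ⟨by linarith [abs_le.mp h2|>.1], (abs_le.mp h2).2⟩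
        have hTclosed : IsClosed T := by
          have : T = ((fun s : ℝ => ((s, c) : ℝ × ℝ)) ⁻¹' D) ∩
              ((fun s : ℝ => ((s - e, c) : ℝ × ℝ)) ⁻¹' D) := rfl
          rw [this]
          exact (hclosed.preimage (by fun_prop)).inter (hclosed.preimage (by fun_prop))
        have hTcomp : IsCompact T := isCompact_Icc.of_isClosed_subset hTclosed hTsub
        have hα : sInf T ∈ T := hTcomp.sInf_mem hTne
        have hβ : sSup T ∈ T := hTcomp.sSup_mem hTne
        have hαβ : sInf T ≤ sSup T :=
          le_trans (csInf_le hTcomp.bddBelow hs₀) (le_csSup hTcomp.bddAbove hs₀)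
        have hTIcc : T = Set.Icc (sInf T) (sSup T) := by
          apply Set.Subset.antisymm
          · intro s hs
            exact ⟨csInf_le hTcomp.bddBelow hs, le_csSup hTcomp.bddAbove hs⟩
          · exact (hTconv.ordConnected).out hα hβ
        refine ⟨{x : ℝ × ℝ | x.2 = c ∧ x.1 ∈ T},
          Or.inr ⟨(sInf T, c), (sSup T, c), by rw [seg_horiz hαβ, ← hTIcc]⟩, ?_⟩
        apply Set.Subset.antisymm
        · rintro x ⟨hxM, hxy⟩
          have hxD := hMD x hxM
          rcases eq_or_lt_of_le (hcle x hxD) with hxc | hxc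
          · refine ⟨hxc.symm, ?_, ?_⟩
            · rw [hxc]; exact hxD
            · rw [hxc]; exact hMD' x hxM
          · exact (hsqueeze x hxM hxc (lt_trans hxy hy₀d)
              (s₀ - e, c) (s₀, c) p q hs₀.2 hs₀.1 hpD hqD rfl
              (by rw [hp2, hq2]) hxc (by rw [hp2]; exact hxy)
              (by simp) hpq.le (Or.inr hpq)).elim
        · rintro x ⟨hx2, hx1⟩
          have hxeq : x = (x.1, c) := by rw [← hx2]
          refine ⟨⟨?_, ?_⟩, ?_⟩
          · rw [hxeq]; exact hfrc _ hx1.1 rfl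
          · rw [hxeq, hsub]
            have := hfrc _ hx1.2 rfl
            simpa using this
          · rw [hx2]; exact hy₀c
      · have hcstrict : ∀ x ∈ M, x.2 < y₀ → c < x.2 := by
          intro x hx hxy
          rcases eq_or_lt_of_le (hcle x (hMD x hx)) with hxc | hxc
          · exfalso
            apply hch
            refine ⟨x.1, ?_, ?_⟩
            · rw [hxc]; exact hMD x hx
            · rw [hxc]; exact hMD' x hx
          · exact hxc
        have key : ∀ x ∈ M, x.2 < y₀ → ∀ x' ∈ M, x'.2 < y₀ → x = x' := by
          intro x hx hxy x' hx' hxy'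
          have hc1 := hcstrict x hx hxy
          have hc1' := hcstrict x' hx' hxy'
          have heq2 : x.2 = x'.2 := by
            by_contra hne
            rcases lt_or_gt_of_ne hne with hlt | hlt
            · exact hsqueeze x' hx' hc1' (by linarith)
                (x.1 - e, x.2) x p q (hMD' x hx) (hMD x hx) hpD hqD rfl
                (by rw [hp2, hq2]) hlt (by rw [hp2]; exact hxy')
                (by simp) hpq.le (Or.inr hpq)
            · exact hsqueeze x hx hc1 (by linarith)
                (x'.1 - e, x'.2) x' p q (hMD' x' hx') (hMD x' hx') hpD hqD rfl
                (by rw [hp2, hq2]) hlt (by rw [hp2]; exact hxy)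
                (by simp) hpq.le (Or.inr hpq)
          obtain ⟨hmax, _⟩ := hclass x hx hc1 (by linarith)
          obtain ⟨hmax', _⟩ := hclass x' hx' hc1' (by linarith)
          have e1 : x'.1 ≤ x.1 := hmax x'.1 (by rw [heq2]; exact hMD x' hx')
          have e2 : x.1 ≤ x'.1 := hmax' x.1 (by rw [← heq2]; exact hMD x hx)
          exact Prod.ext_iff.mpr ⟨le_antisymm e2 e1, heq2⟩
        rcases Set.eq_empty_or_nonempty {x ∈ M | x.2 < y₀} with hemp | ⟨x₁, hx₁⟩
        · exact ⟨∅, Or.inl rfl, hemp⟩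
        · refine ⟨segment ℝ x₁ x₁, Or.inr ⟨x₁, x₁, rfl⟩, ?_⟩
          rw [segment_same]
          exact Set.eq_singleton_iff_unique_mem.mpr
            ⟨hx₁, fun x hx => key x hx.1 hx.2 x₁ hx₁.1 hx₁.2⟩
    -- upper piece
    have hupper : ∃ S₂ : Set (ℝ × ℝ), (S₂ = ∅ ∨ ∃ a b : ℝ × ℝ, S₂ = segment ℝ a b) ∧
        {x ∈ M | y₀ < x.2} = S₂ := by
      by_cases hch : ∃ s : ℝ, ((s, d) : ℝ × ℝ) ∈ D ∧ ((s - e, d) : ℝ × ℝ) ∈ D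
      · set T : Set ℝ := {s : ℝ | ((s, d) : ℝ × ℝ) ∈ D ∧ ((s - e, d) : ℝ × ℝ) ∈ D} with hT_def
        obtain ⟨s₀, hs₀⟩ := hch
        have hTne : T.Nonempty := ⟨s₀, hs₀⟩
        have hTconv : Convex ℝ T := by
          intro s hs s' hs' a b ha hb hab
          have hcc : a * d + b * d = d := by linear_combination d * hab
          have h1 : ((a * s + b * s', d) : ℝ × ℝ) ∈ D := by
            have := hconv hs.1 hs'.1 ha hb hab
            simpa [Prod.smul_mk, Prod.mk_add_mk, smul_eq_mul, hcc] using this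
          have h2 : ((a * s + b * s' - e, d) : ℝ × ℝ) ∈ D := by
            have := hconv hs.2 hs'.2 ha hb hab
            have he' : a * (s - e) + b * (s' - e) = a * s + b * s' - e := by
              linear_combination (-e) * hab
            simpa [Prod.smul_mk, Prod.mk_add_mk, smul_eq_mul, hcc, he'] using this
          exact ⟨by simpa [smul_eq_mul] using h1, by simpa [smul_eq_mul] using h2⟩
        obtain ⟨R, hR⟩ := hD.isBounded.exists_norm_le
        have hTsub : T ⊆ Set.Icc (-R) R := by
          intro s hs
          have h1 := hR _ hs.1
          rw [Prod.norm_def] at h1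
          have h2 : ‖s‖ ≤ R := le_trans (le_max_left _ _) h1
          rw [Real.norm_eq_abs] at h2
          exact ⟨by linarith [abs_le.mp h2|>.1], (abs_le.mp h2).2⟩
        have hTclosed : IsClosed T := by
          have : T = ((fun s : ℝ => ((s, d) : ℝ × ℝ)) ⁻¹' D) ∩
              ((fun s : ℝ => ((s - e, d) : ℝ × ℝ)) ⁻¹' D) := rfl
          rw [this]
          exact (hclosed.preimage (by fun_prop)).inter (hclosed.preimage (by fun_prop))
        have hTcomp : IsCompact T := isCompact_Icc.of_isClosed_subset hTclosed hTsub
        have hα : sInf T ∈ T := hTcomp.sInf_mem hTne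
        have hβ : sSup T ∈ T := hTcomp.sSup_mem hTne
        have hαβ : sInf T ≤ sSup T :=
          le_trans (csInf_le hTcomp.bddBelow hs₀) (le_csSup hTcomp.bddAbove hs₀)
        have hTIcc : T = Set.Icc (sInf T) (sSup T) := by
          apply Set.Subset.antisymm
          · intro s hs
            exact ⟨csInf_le hTcomp.bddBelow hs, le_csSup hTcomp.bddAbove hs⟩
          · exact (hTconv.ordConnected).out hα hβ
        refine ⟨{x : ℝ × ℝ | x.2 = d ∧ x.1 ∈ T},
          Or.inr ⟨(sInf T, d), (sSup T, d), by rw [seg_horiz hαβ, ← hTIcc]⟩, ?_⟩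
        apply Set.Subset.antisymm
        · rintro x ⟨hxM, hxy⟩
          have hxD := hMD x hxM
          rcases eq_or_lt_of_le (hdle x hxD) with hxd | hxd
          · refine ⟨hxd, ?_, ?_⟩
            · rw [← hxd]; exact hxD
            · rw [← hxd]; exact hMD' x hxM
          · exact (hsqueeze x hxM (lt_trans hy₀c hxy) hxd
              p q (s₀ - e, d) (s₀, d) hpD hqD hs₀.2 hs₀.1
              (by rw [hp2, hq2]) rfl (by rw [hp2]; exact hxy) hxd
              hpq.le (by simp) (Or.inl hpq)).elim
        · rintro x ⟨hx2, hx1⟩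
          have hxeq : x = (x.1, d) := by rw [← hx2]
          refine ⟨⟨?_, ?_⟩, ?_⟩
          · rw [hxeq]; exact hfrd _ hx1.1 rfl
          · rw [hxeq, hsub]
            have := hfrd _ hx1.2 rfl
            simpa using this
          · rw [hx2]; exact hy₀d
      · have hdstrict : ∀ x ∈ M, y₀ < x.2 → x.2 < d := by
          intro x hx hxy
          rcases eq_or_lt_of_le (hdle x (hMD x hx)) with hxd | hxd
          · exfalso
            apply hch
            refine ⟨x.1, ?_, ?_⟩
            · rw [← hxd]; exact hMD x hx
            · rw [← hxd]; exact hMD' x hx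
          · exact hxd
        have key : ∀ x ∈ M, y₀ < x.2 → ∀ x' ∈ M, y₀ < x'.2 → x = x' := by
          intro x hx hxy x' hx' hxy'
          have hd1 := hdstrict x hx hxy
          have hd1' := hdstrict x' hx' hxy'
          have heq2 : x.2 = x'.2 := by
            by_contra hne
            rcases lt_or_gt_of_ne hne with hlt | hlt
            · exact hsqueeze x hx (by linarith) hd1
                p q (x'.1 - e, x'.2) x' hpD hqD (hMD' x' hx') (hMD x' hx')
                (by rw [hp2, hq2]) rfl (by rw [hp2]; exact hxy) hlt
                hpq.le (by simp) (Or.inl hpq)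
            · exact hsqueeze x' hx' (by linarith) hd1'
                p q (x.1 - e, x.2) x hpD hqD (hMD' x hx) (hMD x hx)
                (by rw [hp2, hq2]) rfl (by rw [hp2]; exact hxy') hlt
                hpq.le (by simp) (Or.inl hpq)
          obtain ⟨hmax, _⟩ := hclass x hx (by linarith) hd1
          obtain ⟨hmax', _⟩ := hclass x' hx' (by linarith) hd1'
          have e1 : x'.1 ≤ x.1 := hmax x'.1 (by rw [heq2]; exact hMD x' hx')
          have e2 : x.1 ≤ x'.1 := hmax' x.1 (by rw [← heq2]; exact hMD x hx)
          exact Prod.ext_iff.mpr ⟨le_antisymm e2 e1, heq2⟩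
        rcases Set.eq_empty_or_nonempty {x ∈ M | y₀ < x.2} with hemp | ⟨x₁, hx₁⟩
        · exact ⟨∅, Or.inl rfl, hemp⟩
        · refine ⟨segment ℝ x₁ x₁, Or.inr ⟨x₁, x₁, rfl⟩, ?_⟩
          rw [segment_same]
          exact Set.eq_singleton_iff_unique_mem.mpr
            ⟨hx₁, fun x hx => key x hx.1 hx.2 x₁ hx₁.1 hx₁.2⟩
    obtain ⟨S₁, hS₁seg, hS₁eq⟩ := hlower
    obtain ⟨S₂, hS₂seg, hS₂eq⟩ := hupper
    refine ⟨S₁, S₂, hS₁seg, hS₂seg, ?_⟩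
    rw [← hS₁eq, ← hS₂eq]
    apply Set.Subset.antisymm
    · intro x hx
      rcases lt_trichotomy x.2 y₀ with h | h | h
      · exact Or.inl ⟨hx, h⟩
      · exact absurd h (hy₀M x hx)
      · exact Or.inr ⟨hx, h⟩
    · rintro x (⟨hx, _⟩ | ⟨hx, _⟩) <;> exact hx
  · -- Case B : no wide chord
    have hwidth : ∀ y : ℝ, c < y → y < d → ∀ P Q : ℝ × ℝ, P ∈ D → Q ∈ D →
        P.2 = y → Q.2 = y → Q.1 - P.1 ≤ e := by
      intro y hc1 hd1 P Q hP hQ hP2 hQ2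
      by_contra hcon
      push_neg at hcon
      exact hcaseA ⟨y, hc1, hd1, P, Q, hP, hQ, hP2, hQ2, hcon⟩
    have hwidthc : ∀ P Q : ℝ × ℝ, P ∈ D → Q ∈ D → P.2 = c → Q.2 = c → Q.1 - P.1 ≤ e := by
      intro P Q hP hQ hP2 hQ2
      by_contra hcon
      push_neg at hcon
      have hΔ : 0 < Q.1 - P.1 := lt_trans he hcon
      set l : ℝ := (Q.1 - P.1 - e) / (2 * (Q.1 - P.1)) with hl_def
      have hl0 : 0 < l := div_pos (by linarith) (by linarith)
      have hl1 : l < 1 := by rw [div_lt_one (by linarith)]; linarith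
      have hlc : l * (2 * (Q.1 - P.1)) = Q.1 - P.1 - e := div_mul_cancel₀ _ (by linarith)
      have hP' : (1 - l) • P + l • pd ∈ D := hconv hP hpdD (by linarith) hl0.le (by ring)
      have hQ' : (1 - l) • Q + l • pd ∈ D := hconv hQ hpdD (by linarith) hl0.le (by ring)
      have hyP : ((1 - l) • P + l • pd : ℝ × ℝ).2 = (1 - l) * c + l * d := by
        simp only [Prod.snd_add, Prod.smul_snd, smul_eq_mul, hP2, hd_def]
      have hyQ : ((1 - l) • Q + l • pd : ℝ × ℝ).2 = (1 - l) * c + l * d := by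
        simp only [Prod.snd_add, Prod.smul_snd, smul_eq_mul, hQ2, hd_def]
      have hyc : c < (1 - l) * c + l * d := by nlinarith
      have hyd : (1 - l) * c + l * d < d := by nlinarith
      have hw := hwidth _ hyc hyd _ _ hP' hQ' hyP hyQ
      have hco : ((1 - l) • Q + l • pd : ℝ × ℝ).1 - ((1 - l) • P + l • pd : ℝ × ℝ).1
          = (1 - l) * (Q.1 - P.1) := by
        simp only [Prod.fst_add, Prod.smul_fst, smul_eq_mul]; ring
      rw [hco] at hw
      nlinarith
    have hwidthd : ∀ P Q : ℝ × ℝ, P ∈ D → Q ∈ D → P.2 = d → Q.2 = d → Q.1 - P.1 ≤ e := by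
      intro P Q hP hQ hP2 hQ2
      by_contra hcon
      push_neg at hcon
      have hΔ : 0 < Q.1 - P.1 := lt_trans he hcon
      set l : ℝ := (Q.1 - P.1 - e) / (2 * (Q.1 - P.1)) with hl_def
      have hl0 : 0 < l := div_pos (by linarith) (by linarith)
      have hl1 : l < 1 := by rw [div_lt_one (by linarith)]; linarith
      have hlc : l * (2 * (Q.1 - P.1)) = Q.1 - P.1 - e := div_mul_cancel₀ _ (by linarith)
      have hP' : (1 - l) • P + l • pc ∈ D := hconv hP hpcD (by linarith) hl0.le (by ring)
      have hQ' : (1 - l) • Q + l • pc ∈ D := hconv hQ hpcD (by linarith) hl0.le (by ring)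
      have hyP : ((1 - l) • P + l • pc : ℝ × ℝ).2 = (1 - l) * d + l * c := by
        simp only [Prod.snd_add, Prod.smul_snd, smul_eq_mul, hP2, hc_def]
      have hyQ : ((1 - l) • Q + l • pc : ℝ × ℝ).2 = (1 - l) * d + l * c := by
        simp only [Prod.snd_add, Prod.smul_snd, smul_eq_mul, hQ2, hc_def]
      have hyc : c < (1 - l) * d + l * c := by nlinarith
      have hyd : (1 - l) * d + l * c < d := by nlinarith
      have hw := hwidth _ hyc hyd _ _ hP' hQ' hyP hyQ
      have hco : ((1 - l) • Q + l • pc : ℝ × ℝ).1 - ((1 - l) • P + l • pc : ℝ × ℝ).1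
          = (1 - l) * (Q.1 - P.1) := by
        simp only [Prod.fst_add, Prod.smul_fst, smul_eq_mul]; ring
      rw [hco] at hw
      nlinarith
    have hwidth' : ∀ P : ℝ × ℝ, P ∈ D → ∀ Q : ℝ × ℝ, Q ∈ D → P.2 = Q.2 → Q.1 - P.1 ≤ e := by
      intro P hP Q hQ h2
      rcases eq_or_lt_of_le (hcle P hP) with hc1 | hc1
      · exact hwidthc P Q hP hQ hc1.symm (by rw [← h2, ← hc1])
      · rcases eq_or_lt_of_le (hdle P hP) with hd1 | hd1
        · exact hwidthd P Q hP hQ hd1 (by rw [← h2, hd1])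
        · exact hwidth P.2 hc1 hd1 P Q hP hQ rfl h2.symm
    have hMconv : Convex ℝ M := by
      rintro x hx x' hx' a b ha hb hab
      have hzD : a • x + b • x' ∈ D := hconv (hMD x hx) (hMD x' hx') ha hb hab
      have hzD' : (a • x + b • x' : ℝ × ℝ) - (e, 0) ∈ D := by
        have hv : a • ((e, 0) : ℝ × ℝ) + b • ((e, 0) : ℝ × ℝ) = ((e, 0) : ℝ × ℝ) := by
          rw [← add_smul, hab, one_smul]
        have habel : (a • x + b • x' : ℝ × ℝ) - (e, 0)
            = (a • (x - (e, 0)) + b • (x' - (e, 0)))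
              + ((a • ((e, 0) : ℝ × ℝ) + b • ((e, 0) : ℝ × ℝ)) - (e, 0)) := by
          rw [smul_sub, smul_sub]; abel
        rw [habel, hv, sub_self, add_zero]
        exact hconv (hfrsub hx.2) (hfrsub hx'.2) ha hb hab
      constructor
      · rw [hfr]
        refine ⟨hzD, fun hzint => ?_⟩
        obtain ⟨r, hr, hRt, _, hu, hl⟩ := wiggle hzint
        have h1 : c < (a • x + b • x' : ℝ × ℝ).2 := by
          have := hcle _ hl; simp only at this; linarith
        have h2 : (a • x + b • x' : ℝ × ℝ).2 < d := by
          have := hdle _ hu; simp only at this; linarith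
        have hPin : (((a • x + b • x' : ℝ × ℝ).1 - e, (a • x + b • x' : ℝ × ℝ).2) : ℝ × ℝ) ∈ D := by
          rw [← hsub]; exact hzD'
        have hw := hwidth _ h1 h2 _ _ hPin hRt rfl rfl
        simp only at hw
        linarith
      · rw [hfr]
        refine ⟨hzD', fun hzint => ?_⟩
        obtain ⟨r, hr, _, hLt, hu, hl⟩ := wiggle hzint
        rw [hsub] at hu hl hLt
        simp only at hu hl hLt
        have h1 : c < (a • x + b • x' : ℝ × ℝ).2 := by
          have := hcle _ hl; simp only at this; linarith
        have h2 : (a • x + b • x' : ℝ × ℝ).2 < d := by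
          have := hdle _ hu; simp only at this; linarith
        have hQin : (((a • x + b • x' : ℝ × ℝ).1, (a • x + b • x' : ℝ × ℝ).2) : ℝ × ℝ) ∈ D := by
          rw [Prod.mk.eta]; exact hzD
        have hw := hwidth _ h1 h2 _ _ hLt hQin rfl rfl
        simp only at hw
        linarith
    have huniq : ∀ x ∈ M, ∀ x' ∈ M, x.2 = x'.2 → x = x' := by
      intro x hx x' hx' h2
      have e1 : x.1 ≤ x'.1 := by
        have := hwidth' _ (hMD' x' hx') _ (hMD x hx) (by simp [h2])
        simp only at this
        linarith
      have e2 : x'.1 ≤ x.1 := by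
        have := hwidth' _ (hMD' x hx) _ (hMD x' hx') (by simp [h2])
        simp only at this
        linarith
      exact Prod.ext_iff.mpr ⟨le_antisymm e1 e2, h2⟩
    have hMclosed : IsClosed M := by
      have hMeq : M = frontier D ∩ (fun x : ℝ × ℝ => x - (e, 0)) ⁻¹' frontier D := rfl
      rw [hMeq]
      exact isClosed_frontier.inter
        (isClosed_frontier.preimage (continuous_id.sub continuous_const))
    have hMcomp : IsCompact M := hD.of_isClosed_subset hMclosed (fun x hx => hMD x hx)
    rcases Set.eq_empty_or_nonempty M with hemp | hMne
    · refine ⟨∅, ∅, Or.inl rfl, Or.inl rfl, ?_⟩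
      rw [hemp, Set.empty_union]
    · obtain ⟨u₁, hu₁M, hu₁⟩ := hMcomp.exists_isMinOn hMne continuous_snd.continuousOn
      obtain ⟨u₂, hu₂M, hu₂⟩ := hMcomp.exists_isMaxOn hMne continuous_snd.continuousOn
      refine ⟨segment ℝ u₁ u₂, ∅, Or.inr ⟨u₁, u₂, rfl⟩, Or.inl rfl, ?_⟩
      rw [Set.union_empty]
      apply Set.Subset.antisymm
      · intro x hx
        have hy1 : u₁.2 ≤ x.2 := hu₁ hx
        have hy2 : x.2 ≤ u₂.2 := hu₂ hx
        by_cases hdeg : u₂.2 ≤ u₁.2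
        · have hxx : x = u₁ := huniq x hx u₁ hu₁M (le_antisymm (by linarith) hy1)
          rw [hxx]; exact left_mem_segment ℝ u₁ u₂
        · push_neg at hdeg
          set l : ℝ := (x.2 - u₁.2) / (u₂.2 - u₁.2) with hl_def
          have hl0 : 0 ≤ l := div_nonneg (by linarith) (by linarith)
          have hl1 : l ≤ 1 := by rw [div_le_one (by linarith)]; linarith
          have hlc : l * (u₂.2 - u₁.2) = x.2 - u₁.2 := div_mul_cancel₀ _ (by linarith)
          have hzM : (1 - l) • u₁ + l • u₂ ∈ M := hMconv hu₁M hu₂M (by linarith) hl0 (by ring)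
          have hz2 : ((1 - l) • u₁ + l • u₂ : ℝ × ℝ).2 = x.2 := by
            simp only [Prod.snd_add, Prod.smul_snd, smul_eq_mul]
            linear_combination hlc
          have hxx := huniq _ hzM x hx hz2
          rw [← hxx]
          exact ⟨1 - l, l, by linarith, hl0, by ring, rfl⟩
      · exact hMconv.segment_subset hu₁M hu₂M

/-- The boundary of a planar compact convex body meets the boundary of any of
its translates in the union of at most two (possibly degenerate or empty)
segments; if the body is strictly convex, the intersection has at most two
points. -/
theorem boundary_translate_inter {C : Set (ℝ × ℝ)} (hC : IsCompact C)
    (hconv : Convex ℝ C) (hint : (interior C).Nonempty)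
    (v : ℝ × ℝ) (hv : v ≠ 0) :
    (∃ S₁ S₂ : Set (ℝ × ℝ),
        (S₁ = ∅ ∨ ∃ a b : ℝ × ℝ, S₁ = segment ℝ a b) ∧
        (S₂ = ∅ ∨ ∃ a b : ℝ × ℝ, S₂ = segment ℝ a b) ∧
        frontier C ∩ frontier ((fun x => x + v) '' C) = S₁ ∪ S₂) ∧
      (StrictConvex ℝ C →
        (frontier C ∩ frontier ((fun x => x + v) '' C)).encard ≤ 2) := by
  classical
  set e : ℝ := v.1 * v.1 + v.2 * v.2 with he_def
  have he : 0 < e := by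
    have hne : v.1 ≠ 0 ∨ v.2 ≠ 0 := by
      by_contra h
      push_neg at h
      exact hv (Prod.ext_iff.mpr ⟨h.1, h.2⟩)
    rcases hne with h | h
    · nlinarith [mul_self_pos.mpr h, mul_self_nonneg v.2]
    · nlinarith [mul_self_pos.mpr h, mul_self_nonneg v.1]
  set Leq : (ℝ × ℝ) ≃ₗ[ℝ] (ℝ × ℝ) :=
    { toFun := fun x => (v.1 * x.1 + v.2 * x.2, -v.2 * x.1 + v.1 * x.2)
      invFun := fun x => ((v.1 * x.1 - v.2 * x.2) / e, (v.2 * x.1 + v.1 * x.2) / e)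
      map_add' := by intro x y; ext <;> simp <;> ring
      map_smul' := by intro m x; ext <;> simp <;> ring
      left_inv := by
        intro x
        ext
        · show (v.1 * (v.1 * x.1 + v.2 * x.2) - v.2 * (-v.2 * x.1 + v.1 * x.2)) / e = x.1
          field_simp
          linear_combination x.1 * he_def.symm
        · show (v.2 * (v.1 * x.1 + v.2 * x.2) + v.1 * (-v.2 * x.1 + v.1 * x.2)) / e = x.2
          field_simp
          linear_combination x.2 * he_def.symm
      right_inv := by
        intro x
        ext
        · show v.1 * ((v.1 * x.1 - v.2 * x.2) / e) + v.2 * ((v.2 * x.1 + v.1 * x.2) / e) = x.1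
          field_simp
          linear_combination x.1 * he_def.symm
        · show -v.2 * ((v.1 * x.1 - v.2 * x.2) / e) + v.1 * ((v.2 * x.1 + v.1 * x.2) / e) = x.2
          field_simp
          linear_combination x.2 * he_def.symm }
    with hLeq_def
  set Lc : (ℝ × ℝ) ≃L[ℝ] (ℝ × ℝ) := Leq.toContinuousLinearEquiv with hLc_def
  set H : (ℝ × ℝ) ≃ₜ (ℝ × ℝ) := Lc.toHomeomorph with hH_def
  set D : Set (ℝ × ℝ) := ⇑H '' C with hD_def
  have hDcomp : IsCompact D := hC.image H.continuous
  have hDconv : Convex ℝ D := hconv.linear_image Leq.toLinearMap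
  have hDint : (interior D).Nonempty := by
    obtain ⟨z, hz⟩ := hint
    exact ⟨H z, by rw [← H.image_interior]; exact Set.mem_image_of_mem _ hz⟩
  have hLv : Leq v = ((e, 0) : ℝ × ℝ) := by
    show (v.1 * v.1 + v.2 * v.2, -v.2 * v.1 + v.1 * v.2) = ((e, 0) : ℝ × ℝ)
    rw [Prod.ext_iff]
    exact ⟨rfl, by ring⟩
  have hfr_iff : ∀ s : Set (ℝ × ℝ), ∀ z : ℝ × ℝ, z ∈ frontier s ↔ H z ∈ frontier (⇑H '' s) := by
    intro s z
    rw [← H.image_frontier]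
    exact (H.injective.mem_set_image).symm
  have hHsub : ∀ x : ℝ × ℝ, H (x - v) = H x - (e, 0) := by
    intro x
    show Leq (x - v) = Leq x - (e, 0)
    rw [map_sub, hLv]
  have htr : ∀ x : ℝ × ℝ, x ∈ frontier ((fun z => z + v) '' C) ↔ x - v ∈ frontier C := by
    intro x
    have h3 : frontier ((fun z => z + v) '' C) = (fun z => z + v) '' frontier C :=
      (Homeomorph.image_frontier (Homeomorph.addRight v) C).symm
    rw [h3]
    constructor
    · rintro ⟨y, hy, rfl⟩
      simpa [add_sub_cancel_right] using hy
    · intro h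
      exact ⟨x - v, h, by simp⟩
  have hkey : frontier C ∩ frontier ((fun x => x + v) '' C)
      = ⇑H ⁻¹' {x : ℝ × ℝ | x ∈ frontier D ∧ x - (e, 0) ∈ frontier D} := by
    ext x
    simp only [Set.mem_inter_iff, Set.mem_preimage, Set.mem_setOf_eq]
    apply and_congr
    · exact hfr_iff C x
    · rw [htr x, hfr_iff C (x - v), hHsub x]
  obtain ⟨S₁, S₂, hs1, hs2, hMeq⟩ := translate_main hDcomp hDconv hDint he
  have hseg : ∀ a b : ℝ × ℝ, ⇑H ⁻¹' segment ℝ a b = segment ℝ (Leq.symm a) (Leq.symm b) := by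
    intro a b
    have himg : ⇑H '' segment ℝ (Leq.symm a) (Leq.symm b) = segment ℝ a b := by
      have h4 := image_segment ℝ Leq.toLinearMap.toAffineMap (Leq.symm a) (Leq.symm b)
      have hco : ⇑H = ⇑Leq.toLinearMap.toAffineMap := rfl
      rw [hco, h4]
      rw [show (Leq.toLinearMap.toAffineMap (Leq.symm a) : ℝ × ℝ) = a from Leq.apply_symm_apply a,
        show (Leq.toLinearMap.toAffineMap (Leq.symm b) : ℝ × ℝ) = b from Leq.apply_symm_apply b]
    rw [← himg, Set.preimage_image_eq _ H.injective]
  have hpre : ∀ S : Set (ℝ × ℝ), (S = ∅ ∨ ∃ a b : ℝ × ℝ, S = segment ℝ a b) →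
      (⇑H ⁻¹' S = ∅ ∨ ∃ a b : ℝ × ℝ, ⇑H ⁻¹' S = segment ℝ a b) := by
    intro S hS
    rcases hS with rfl | ⟨a, b, rfl⟩
    · left; simp
    · right; exact ⟨Leq.symm a, Leq.symm b, hseg a b⟩
  constructor
  · exact ⟨⇑H ⁻¹' S₁, ⇑H ⁻¹' S₂, hpre S₁ hs1, hpre S₂ hs2,
      by rw [hkey, hMeq, Set.preimage_union]⟩
  · intro hSC
    rw [hkey, hMeq, Set.preimage_union]
    refine le_trans (Set.encard_union_le _ _) ?_
    have hCcl : IsClosed C := hC.isClosed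
    have hfrC : frontier C ⊆ C := hCcl.frontier_subset
    have hsubfr : ∀ S : Set (ℝ × ℝ), S ⊆ S₁ ∪ S₂ → ⇑H ⁻¹' S ⊆ frontier C := by
      intro S hSsub x hx
      have : H x ∈ S₁ ∪ S₂ := hSsub hx
      rw [← hMeq] at this
      have h5 : x ∈ frontier C ∩ frontier ((fun x => x + v) '' C) := by
        rw [hkey]; exact this
      exact h5.1
    have hbound : ∀ S : Set (ℝ × ℝ), (S = ∅ ∨ ∃ a b : ℝ × ℝ, S = segment ℝ a b) →
        S ⊆ S₁ ∪ S₂ → (⇑H ⁻¹' S).encard ≤ 1 := by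
      intro S hS hSsub
      rcases hS with rfl | ⟨a, b, rfl⟩
      · simp
      · rw [hseg a b]
        set a' := Leq.symm a
        set b' := Leq.symm b
        by_cases hab : a' = b'
        · rw [hab, segment_same]
          simp
        · exfalso
          have hsubfr' : segment ℝ a' b' ⊆ frontier C := by
            rw [← hseg a b]; exact hsubfr _ hSsub
          have ha'C : a' ∈ C := hfrC (hsubfr' (left_mem_segment ℝ a' b'))
          have hb'C : b' ∈ C := hfrC (hsubfr' (right_mem_segment ℝ a' b'))
          have hmid : (1/2 : ℝ) • a' + (1/2 : ℝ) • b' ∈ interior C :=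
            hSC ha'C hb'C hab (by norm_num) (by norm_num) (by norm_num)
          have hmid2 : (1/2 : ℝ) • a' + (1/2 : ℝ) • b' ∈ segment ℝ a' b' :=
            ⟨1/2, 1/2, by norm_num, by norm_num, by norm_num, rfl⟩
          have := hsubfr' hmid2
          rw [hCcl.frontier_eq] at this
          exact this.2 hmid
    have h1 := hbound S₁ hs1 Set.subset_union_left
    have h2 := hbound S₂ hs2 Set.subset_union_right
    calc (⇑H ⁻¹' S₁).encard + (⇑H ⁻¹' S₂).encard ≤ 1 + 1 := add_le_add h1 h2
      _ = 2 := one_add_one_eq_two
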